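/- Weak duality for the equivalence-determination semidefinite program: let M₁, M₂ be Hermitian 64×64 matrices, let (Π₁, Π₂, Y, Y¹, Y⁰) be a feasible general-scheme tester, let λ be a real number, and let Ω (on K1⊗K2⊗K3⊗H1⊗H2⊗H3), Ω¹ (on K1⊗K2⊗H1⊗H2), Ω⁰ (on K1⊗H1) be positive semidefinite matrices satisfying, in the Loewner order: (1/2)M₁ ≤ Ω, (1/2)M₂ ≤ Ω, Tr_{K3}Ω ≤ I_{H3}⊗Ω¹ (identity on the H3 factor tensored with Ω¹ on the remaining factors), Tr_{K2}Ω¹ ≤ I_{H2}⊗Ω⁰, and Tr_{K1}Ω⁰ ≤ λ·I_{H1}. Then (1/2)·Tr(M₁Π₁ + M₂Π₂) ≤ λ. -/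

import Mathlib

open MeasureTheory Matrix ComplexOrder

noncomputable section

/-- `SU(2)`: the special unitary group of 2×2 complex matrices. -/
abbrev SU2 := Matrix.specialUnitaryGroup (Fin 2) ℂ

instance : MeasurableSpace SU2 := borel SU2

abbrev Q := Fin 2

abbrev Mat2 := Matrix Q Q ℂ

/-- The rank-one outer product `|v⟩⟨v|`. -/
def outer {n : Type*} (v : n → ℂ) : Matrix n n ℂ :=
  fun a b => v a * (starRingEnd ℂ) (v b)

/-- Index of the three-qubit factor `K1⊗K2⊗K3` (or `H1⊗H2⊗H3`). -/
abbrev Idx3 := Q × Q × Q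

abbrev Mat8 := Matrix Idx3 Idx3 ℂ

/-- Index of the six-qubit space `K1⊗K2⊗K3⊗H1⊗H2⊗H3`. -/
abbrev Idx6 := Idx3 × Idx3

abbrev Mat64 := Matrix Idx6 Idx6 ℂ

/-- Kronecker product of three qubit operators. -/
def kron3 (A B C : Mat2) : Mat8 :=
  fun p q => A p.1 q.1 * B p.2.1 q.2.1 * C p.2.2 q.2.2

/-- The unnormalized maximally entangled vector `|I⟩⟩ = Σ |ijk⟩⊗|ijk⟩`. -/
def ketI : Idx6 → ℂ := fun p => if p.1 = p.2 then 1 else 0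

/-- `W ⊗ I₈`. -/
def WtI (W : Mat8) : Mat64 := fun p q => W p.1 q.1 * (if p.2 = q.2 then 1 else 0)

/-- `|W⟩⟩ = (W ⊗ I₈)|I⟩⟩`. -/
def ketW (W : Mat8) : Idx6 → ℂ := WtI W *ᵥ ketI

/-- Index of `K1⊗K2⊗H1⊗H2⊗H3`. -/
abbrev IdxY := (Q × Q) × Idx3

abbrev MatY := Matrix IdxY IdxY ℂ

/-- Index of `K1⊗K2⊗H1⊗H2`. -/
abbrev IdxO1 := (Q × Q) × (Q × Q)

abbrev MatO1 := Matrix IdxO1 IdxO1 ℂ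

/-- Index of `K1⊗H1⊗H2`. -/
abbrev IdxY1 := Q × Q × Q

abbrev MatY1 := Matrix IdxY1 IdxY1 ℂ

/-- Index of `K1⊗H1`. -/
abbrev IdxO0 := Q × Q

abbrev MatO0 := Matrix IdxO0 IdxO0 ℂ

/-- Identity on the `K3` factor tensored with `Y` on the remaining factors. -/
def IdK3Y (Y : MatY) : Mat64 := fun p q =>
  (if p.1.2.2 = q.1.2.2 then 1 else 0) *
    Y ((p.1.1, p.1.2.1), p.2) ((q.1.1, q.1.2.1), q.2)

/-- Partial trace of `Y` over the `H3` factor. -/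
def TrH3 (Y : MatY) : MatO1 := fun p q =>
  ∑ h3 : Q, Y (p.1, (p.2.1, p.2.2, h3)) (q.1, (q.2.1, q.2.2, h3))

/-- Identity on the `K2` factor tensored with `Y¹` on `K1⊗H1⊗H2`. -/
def IdK2Y1 (Y1 : MatY1) : MatO1 := fun p q =>
  (if p.1.2 = q.1.2 then 1 else 0) * Y1 (p.1.1, p.2) (q.1.1, q.2)

/-- Partial trace of `Y¹` over the `H2` factor. -/
def TrH2 (Y1 : MatY1) : MatO0 := fun p q =>
  ∑ h2 : Q, Y1 (p.1, p.2, h2) (q.1, q.2, h2)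

/-- Identity on the `K1` factor tensored with `Y⁰` on `H1`. -/
def IdK1Y0 (Y0 : Mat2) : MatO0 := fun p q =>
  (if p.1 = q.1 then 1 else 0) * Y0 p.2 q.2

/-- A feasible general-scheme tester `(Π₁, Π₂, Y, Y¹, Y⁰)`. -/
def Feasible (P₁ P₂ : Mat64) (Y : MatY) (Y1 : MatY1) (Y0 : Mat2) : Prop :=
  P₁.PosSemidef ∧ P₂.PosSemidef ∧ Y.PosSemidef ∧ Y1.PosSemidef ∧ Y0.PosSemidef ∧
    P₁ + P₂ = IdK3Y Y ∧ TrH3 Y = IdK2Y1 Y1 ∧ TrH2 Y1 = IdK1Y0 Y0 ∧ Y0.trace = 1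

/-- Partial trace of `Ω` over the `K3` factor. -/
def TrK3 (O : Mat64) : MatY := fun p q =>
  ∑ k3 : Q, O ((p.1.1, p.1.2, k3), p.2) ((q.1.1, q.1.2, k3), q.2)

/-- Identity on the `H3` factor tensored with `Ω¹` on `K1⊗K2⊗H1⊗H2`. -/
def IdH3O1 (O1 : MatO1) : MatY := fun p q =>
  (if p.2.2.2 = q.2.2.2 then 1 else 0) *
    O1 (p.1, (p.2.1, p.2.2.1)) (q.1, (q.2.1, q.2.2.1))

/-- Partial trace of `Ω¹` over the `K2` factor. -/
def TrK2 (O1 : MatO1) : MatY1 := fun p q =>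
  ∑ k2 : Q, O1 ((p.1, k2), p.2) ((q.1, k2), q.2)

/-- Identity on the `H2` factor tensored with `Ω⁰` on `K1⊗H1`. -/
def IdH2O0 (O0 : MatO0) : MatY1 := fun p q =>
  (if p.2.2 = q.2.2 then 1 else 0) * O0 (p.1, p.2.1) (q.1, q.2.1)

/-- Partial trace of `Ω⁰` over the `K1` factor. -/
def TrK1 (O0 : MatO0) : Mat2 := fun p q => ∑ k1 : Q, O0 (k1, p) (k1, q)

/-- Trace of a PSD matrix is nonnegative (in `ComplexOrder`). -/
lemma psd_trace_nonneg {n : Type*} [Fintype n] [DecidableEq n] {M : Matrix n n ℂ}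
    (h : M.PosSemidef) : 0 ≤ M.trace := by
  refine Finset.sum_nonneg fun i _ => ?_
  exact h.diag_nonneg

/-- Trace of a product of PSD matrices is nonnegative. -/
lemma trace_mul_nonneg {n : Type*} [Fintype n] [DecidableEq n] {A B : Matrix n n ℂ}
    (hA : A.PosSemidef) (hB : B.PosSemidef) : 0 ≤ (A * B).trace := by
  open MatrixOrder in
  obtain ⟨C, rfl⟩ := CStarAlgebra.nonneg_iff_eq_star_mul_self.mp hA.nonneg
  rw [Matrix.mul_assoc, Matrix.trace_mul_comm]
  exact psd_trace_nonneg (hB.mul_mul_conjTranspose_same C)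

lemma trace_sub_equiv {m n : Type*} [Fintype m] [Fintype n] (e : m ≃ n) (A : Matrix n n ℂ) :
    (A.submatrix e e).trace = A.trace :=
  Fintype.sum_equiv e _ _ (fun _ => rfl)

/-- The key adjointness identity: `Tr(O · (1 ⊗ Y)) = Tr((Tr_α O) · Y)`. -/
lemma key {α β : Type*} [Fintype α] [DecidableEq α] [Fintype β]
    (O : Matrix (α × β) (α × β) ℂ) (Y : Matrix β β ℂ) :
    (O * Matrix.of (fun p q : α × β => (if p.1 = q.1 then (1:ℂ) else 0) * Y p.2 q.2)).trace
      = (Matrix.of (fun a b : β => ∑ k : α, O (k, a) (k, b)) * Y).trace := by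
  simp only [Matrix.trace, Matrix.diag, Matrix.mul_apply, Matrix.of_apply, Fintype.sum_prod_type,
    ite_mul, one_mul, zero_mul, mul_ite, mul_zero, Finset.sum_ite_irrel, Finset.sum_const_zero,
    Finset.sum_ite_eq, Finset.sum_ite_eq', Finset.mem_univ, if_true, Finset.sum_mul]
  rw [Finset.sum_comm]
  refine Finset.sum_congr rfl fun a _ => ?_
  rw [Finset.sum_comm]

/-- Generic reindexed form of `key`. -/
lemma key' {γ α β : Type*} [Fintype α] [DecidableEq α] [Fintype β] [Fintype γ]
    (e : γ ≃ α × β) (O : Matrix γ γ ℂ) (Y : Matrix β β ℂ) :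
    (O * (Matrix.of (fun p q : α × β =>
        (if p.1 = q.1 then (1:ℂ) else 0) * Y p.2 q.2)).submatrix e e).trace
      = (Matrix.of (fun a b : β =>
          ∑ k : α, O (e.symm (k, a)) (e.symm (k, b))) * Y).trace := by
  have h2 : O = (O.submatrix e.symm e.symm).submatrix e e := by
    rw [Matrix.submatrix_submatrix]
    simp [Equiv.symm_comp_self]
  calc (O * (Matrix.of (fun p q : α × β =>
        (if p.1 = q.1 then (1:ℂ) else 0) * Y p.2 q.2)).submatrix e e).trace
      = (((O.submatrix e.symm e.symm).submatrix e e) * (Matrix.of (fun p q : α × β =>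
        (if p.1 = q.1 then (1:ℂ) else 0) * Y p.2 q.2)).submatrix e e).trace := by rw [← h2]
    _ = (((O.submatrix e.symm e.symm) * Matrix.of (fun p q : α × β =>
        (if p.1 = q.1 then (1:ℂ) else 0) * Y p.2 q.2)).submatrix e e).trace := by
        rw [Matrix.submatrix_mul_equiv]
    _ = ((O.submatrix e.symm e.symm) * Matrix.of (fun p q : α × β =>
        (if p.1 = q.1 then (1:ℂ) else 0) * Y p.2 q.2)).trace := trace_sub_equiv e _
    _ = _ := key _ Y

def e1 : Idx6 ≃ Q × IdxY where
  toFun p := (p.1.2.2, ((p.1.1, p.1.2.1), p.2))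
  invFun x := ((x.2.1.1, x.2.1.2, x.1), x.2.2)
  left_inv p := rfl
  right_inv x := rfl

def e2 : IdxY ≃ Q × IdxO1 where
  toFun p := (p.2.2.2, (p.1, (p.2.1, p.2.2.1)))
  invFun x := (x.2.1, (x.2.2.1, x.2.2.2, x.1))
  left_inv p := rfl
  right_inv x := rfl

def e3 : IdxO1 ≃ Q × IdxY1 where
  toFun p := (p.1.2, (p.1.1, p.2))
  invFun x := ((x.2.1, x.1), x.2.2)
  left_inv p := rfl
  right_inv x := rfl

def e4 : IdxY1 ≃ Q × IdxO0 where
  toFun p := (p.2.2, (p.1, p.2.1))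
  invFun x := (x.2.1, x.2.2, x.1)
  left_inv p := rfl
  right_inv x := rfl

def e5 : IdxO0 ≃ Q × Q := Equiv.refl _

lemma pair1 (O : Mat64) (Y : MatY) : (O * IdK3Y Y).trace = (TrK3 O * Y).trace := by
  have h : IdK3Y Y = (Matrix.of (fun p q : Q × IdxY =>
      (if p.1 = q.1 then (1:ℂ) else 0) * Y p.2 q.2)).submatrix e1 e1 := rfl
  rw [h, key' e1 O Y]
  rfl

lemma pair2 (Y : MatY) (O1 : MatO1) : (Y * IdH3O1 O1).trace = (TrH3 Y * O1).trace := by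
  have h : IdH3O1 O1 = (Matrix.of (fun p q : Q × IdxO1 =>
      (if p.1 = q.1 then (1:ℂ) else 0) * O1 p.2 q.2)).submatrix e2 e2 := rfl
  rw [h, key' e2 Y O1]
  rfl

lemma pair3 (O1 : MatO1) (Y1 : MatY1) : (O1 * IdK2Y1 Y1).trace = (TrK2 O1 * Y1).trace := by
  have h : IdK2Y1 Y1 = (Matrix.of (fun p q : Q × IdxY1 =>
      (if p.1 = q.1 then (1:ℂ) else 0) * Y1 p.2 q.2)).submatrix e3 e3 := rfl
  rw [h, key' e3 O1 Y1]
  rfl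

lemma pair4 (Y1 : MatY1) (O0 : MatO0) : (Y1 * IdH2O0 O0).trace = (TrH2 Y1 * O0).trace := by
  have h : IdH2O0 O0 = (Matrix.of (fun p q : Q × IdxO0 =>
      (if p.1 = q.1 then (1:ℂ) else 0) * O0 p.2 q.2)).submatrix e4 e4 := rfl
  rw [h, key' e4 Y1 O0]
  rfl

lemma pair5 (O0 : MatO0) (Y0 : Mat2) : (O0 * IdK1Y0 Y0).trace = (TrK1 O0 * Y0).trace := by
  have h : IdK1Y0 Y0 = (Matrix.of (fun p q : Q × Q =>
      (if p.1 = q.1 then (1:ℂ) else 0) * Y0 p.2 q.2)).submatrix e5 e5 := rfl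
  rw [h, key' e5 O0 Y0]
  rfl
/-- Weak duality for the equivalence-determination semidefinite program. -/
theorem weak_duality (M₁ M₂ : Mat64) (hM₁ : M₁.IsHermitian) (hM₂ : M₂.IsHermitian)
    (P₁ P₂ : Mat64) (Y : MatY) (Y1 : MatY1) (Y0 : Mat2)
    (hfeas : Feasible P₁ P₂ Y Y1 Y0)
    (lam : ℝ) (O : Mat64) (O1 : MatO1) (O0 : MatO0)
    (hO : O.PosSemidef) (hO1 : O1.PosSemidef) (hO0 : O0.PosSemidef)
    (hd1 : (O - (1/2 : ℂ) • M₁).PosSemidef)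
    (hd2 : (O - (1/2 : ℂ) • M₂).PosSemidef)
    (hd3 : (IdH3O1 O1 - TrK3 O).PosSemidef)
    (hd4 : (IdH2O0 O0 - TrK2 O1).PosSemidef)
    (hd5 : ((lam : ℂ) • (1 : Mat2) - TrK1 O0).PosSemidef) :
    (1/2 : ℂ) * (M₁ * P₁ + M₂ * P₂).trace ≤ (lam : ℂ) := by
  obtain ⟨hP₁, hP₂, hY, hY1, hY0, hsum, hY3, hY2, htr⟩ := hfeas
  have i1 : (1/2 : ℂ) * (M₁ * P₁).trace ≤ (O * P₁).trace := by
    have h := trace_mul_nonneg hd1 hP₁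
    rw [Matrix.sub_mul, Matrix.trace_sub, Matrix.smul_mul, Matrix.trace_smul,
      smul_eq_mul] at h
    exact sub_nonneg.mp h
  have i2 : (1/2 : ℂ) * (M₂ * P₂).trace ≤ (O * P₂).trace := by
    have h := trace_mul_nonneg hd2 hP₂
    rw [Matrix.sub_mul, Matrix.trace_sub, Matrix.smul_mul, Matrix.trace_smul,
      smul_eq_mul] at h
    exact sub_nonneg.mp h
  have step1 : (O * P₁).trace + (O * P₂).trace = (TrK3 O * Y).trace := by
    rw [← Matrix.trace_add, ← Matrix.mul_add, hsum, pair1]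
  have step2 : (TrK3 O * Y).trace ≤ (TrK2 O1 * Y1).trace := by
    have h := trace_mul_nonneg hd3 hY
    rw [Matrix.sub_mul, Matrix.trace_sub] at h
    have h' := sub_nonneg.mp h
    calc (TrK3 O * Y).trace ≤ (IdH3O1 O1 * Y).trace := h'
      _ = (Y * IdH3O1 O1).trace := Matrix.trace_mul_comm _ _
      _ = (TrH3 Y * O1).trace := pair2 Y O1
      _ = (IdK2Y1 Y1 * O1).trace := by rw [hY3]
      _ = (O1 * IdK2Y1 Y1).trace := Matrix.trace_mul_comm _ _
      _ = (TrK2 O1 * Y1).trace := pair3 O1 Y1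
  have step3 : (TrK2 O1 * Y1).trace ≤ (TrK1 O0 * Y0).trace := by
    have h := trace_mul_nonneg hd4 hY1
    rw [Matrix.sub_mul, Matrix.trace_sub] at h
    have h' := sub_nonneg.mp h
    calc (TrK2 O1 * Y1).trace ≤ (IdH2O0 O0 * Y1).trace := h'
      _ = (Y1 * IdH2O0 O0).trace := Matrix.trace_mul_comm _ _
      _ = (TrH2 Y1 * O0).trace := pair4 Y1 O0
      _ = (IdK1Y0 Y0 * O0).trace := by rw [hY2]
      _ = (O0 * IdK1Y0 Y0).trace := Matrix.trace_mul_comm _ _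
      _ = (TrK1 O0 * Y0).trace := pair5 O0 Y0
  have step4 : (TrK1 O0 * Y0).trace ≤ (lam : ℂ) := by
    have h := trace_mul_nonneg hd5 hY0
    rw [Matrix.sub_mul, Matrix.trace_sub, Matrix.smul_mul, Matrix.trace_smul,
      Matrix.one_mul, smul_eq_mul, htr, mul_one] at h
    exact sub_nonneg.mp h
  calc (1/2 : ℂ) * (M₁ * P₁ + M₂ * P₂).trace
      = (1/2 : ℂ) * (M₁ * P₁).trace + (1/2 : ℂ) * (M₂ * P₂).trace := by
        rw [Matrix.trace_add]; ring
    _ ≤ (O * P₁).trace + (O * P₂).trace := add_le_add i1 i2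
    _ = (TrK3 O * Y).trace := step1
    _ ≤ (TrK2 O1 * Y1).trace := step2
    _ ≤ (TrK1 O0 * Y0).trace := step3
    _ ≤ (lam : ℂ) := step4
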